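/- Let p, q be idempotents in a ring R with p − q Drazin invertible. Then p − pq is Drazin invertible with (p − pq)^D = p ((p−q)^D)³. -/

import Mathlib

/-- `b` is the Drazin inverse of `a`. -/
def IsDrazinInverse {R : Type*} [Ring R] (a b : R) : Prop :=
  a * b = b * a ∧ b * a * b = b ∧ IsNilpotent (a - a * a * b)

section aux
variable {R : Type*} [Ring R]

/-- The Drazin inverse lies in the double commutant. -/
lemma drazin_double_comm {a b x : R} (h1 : a * b = b * a) (h2 : b * a * b = b)
    (hn : IsNilpotent (a - a * a * b)) (hx : x * a = a * x) : x * b = b * x := by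
  obtain ⟨k, hk⟩ := hn
  have cab : Commute a b := h1
  have cxa : Commute x a := hx
  have hab2 : a * b * b = b := by rw [h1]; exact h2
  have hb2a : b * b * a = b := by
    rw [mul_assoc, ← h1, ← mul_assoc]; exact h2
  -- f3 : a^m * x * b^(m+1) = x*b
  have f3 : ∀ m : ℕ, a ^ m * x * b ^ (m + 1) = x * b := by
    intro m
    induction m with
    | zero => simp
    | succ m ih =>
      calc a ^ (m+1) * x * b ^ (m+2) = a * (a ^ m * x * b ^ (m+1)) * b := by
            rw [pow_succ' a m, pow_succ b (m+1)]; noncomm_ring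
        _ = a * (x * b) * b := by rw [ih]
        _ = x * (a * b * b) := by
            rw [show a * (x * b) * b = a * x * (b * b) by noncomm_ring, ← hx]
            noncomm_ring
        _ = x * b := by rw [hab2]
  -- f4 : b^(m+1) * x * a^m = b*x
  have f4 : ∀ m : ℕ, b ^ (m + 1) * x * a ^ m = b * x := by
    intro m
    induction m with
    | zero => simp
    | succ m ih =>
      calc b ^ (m+2) * x * a ^ (m+1) = b * (b ^ (m+1) * x * a ^ m) * a := by
            rw [pow_succ' b (m+1), pow_succ a m]; noncomm_ring
        _ = b * (b * x) * a := by rw [ih]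
        _ = b * b * (x * a) := by noncomm_ring
        _ = b * b * a * x := by rw [hx, ← mul_assoc]
        _ = b * x := by rw [hb2a]
  -- nilpotency: a^(k+1) = a^(k+1) * (a*b)
  have habab : a * b * (a * b) = a * b := by
    calc a * b * (a * b) = a * (b * a * b) := by noncomm_ring
      _ = a * b := by rw [h2]
  have hu : (1 - a * b) * (1 - a * b) = 1 - a * b := by noncomm_ring [habab]
  have hcau : Commute a (1 - a * b) := by
    have h' : a * (a * b) = a * b * a := by
      rw [mul_assoc a b a, ← h1, ← mul_assoc]
    show a * (1 - a * b) = (1 - a * b) * a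
    noncomm_ring [h']
  have hAu : a ^ (k + 1) * (1 - a * b) = 0 := by
    have hfac : a - a * a * b = a * (1 - a * b) := by noncomm_ring
    have hmp : (a * (1 - a * b)) ^ (k + 1) = a ^ (k+1) * (1 - a*b) ^ (k+1) :=
      hcau.mul_pow (k+1)
    have hup : (1 - a*b) ^ (k+1) = 1 - a*b := IsIdempotentElem.pow_succ_eq k hu
    have hz : (a * (1 - a * b)) ^ (k + 1) = 0 := by
      rw [← hfac, pow_succ, hk, zero_mul]
    rw [hmp, hup] at hz
    exact hz
  have hA : a ^ (k+1) * (a * b) = a ^ (k+1) := by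
    have h' := hAu
    rw [mul_sub, mul_one, sub_eq_zero] at h'
    exact h'.symm
  have hA' : (a * b) * a ^ (k+1) = a ^ (k+1) := by
    have c : Commute (a*b) (a ^ (k+1)) := ((Commute.refl a).mul_right cab).symm.pow_right _
    rw [c.eq]; exact hA
  have hba : b * a * (b * a) = b * a := by
    calc b * a * (b * a) = (b * a * b) * a := by noncomm_ring
      _ = b * a := by rw [h2]
  have hbapow : (b * a) ^ (k+1) = b * a := IsIdempotentElem.pow_succ_eq k hba
  have key1 : x * b = a * b * (x * b) := by
    calc x * b = a ^ (k+1) * x * b ^ (k+2) := (f3 (k+1)).symm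
      _ = (a * b) * a ^ (k+1) * x * b ^ (k+2) := by rw [hA']
      _ = a * b * (a ^ (k+1) * x * b ^ (k+2)) := by noncomm_ring
      _ = a * b * (x * b) := by rw [f3 (k+1)]
  have key2 : b * x = b * a * (x * b) := by
    calc b * x = b ^ (k+2) * x * a ^ (k+1) := (f4 (k+1)).symm
      _ = b ^ (k+2) * x * (a ^ (k+1) * (a * b)) := by rw [hA]
      _ = b ^ (k+2) * (x * a ^ (k+2)) * b := by
          rw [show a ^ (k+1) * (a*b) = a ^ (k+2) * b by rw [pow_succ a (k+1)]; noncomm_ring]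
          noncomm_ring
      _ = b ^ (k+2) * (a ^ (k+2) * x) * b := by rw [(cxa.pow_right (k+2)).eq]
      _ = (b ^ (k+2) * a ^ (k+2)) * x * b := by noncomm_ring
      _ = (b * a) ^ (k+2) * x * b := by rw [(cab.symm.mul_pow (k+2))]
      _ = b * a * (x * b) := by
          rw [show (k+2) = (k+1)+1 from rfl, pow_succ, hbapow, hba]
          noncomm_ring
  rw [key1, key2, h1]
end aux


section main
variable {R : Type*} [Ring R]

lemma main_aux {a d p : R} (h1 : a * d = d * a) (h2 : d * a * d = d)
    (h3 : IsNilpotent (a - a * a * d)) (hp : p * p = p)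
    (hpa2 : p * (a * a) = (a * a) * p) (hpap : p * a * p = p * (a * a)) :
    IsDrazinInverse (p * a) (p * d ^ 3) := by
  have cad : Commute a d := h1
  have had2 : a * d * d = d := by rw [h1]; exact h2
  have hd2a : d * d * a = d := by rw [mul_assoc, ← h1, ← mul_assoc]; exact h2
  have hd2a2 : d * d * (a * a) = d * a := by
    rw [show d * d * (a * a) = (d * d * a) * a by noncomm_ring, hd2a]
  have hada : a * a * (d * d) = a * d := by
    rw [show a * a * (d * d) = a * (a * d * d) by noncomm_ring, had2]
  -- d * d is a Drazin inverse of a * a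
  have g1 : (a * a) * (d * d) = (d * d) * (a * a) :=
    ((cad.mul_left cad).mul_right (cad.mul_left cad)).eq
  have g2 : (d * d) * (a * a) * (d * d) = d * d := by
    rw [show (d*d) * (a*a) * (d*d) = (d*d*(a*a)) * (d*d) by noncomm_ring, hd2a2,
        show (d*a) * (d*d) = (d*a*d)*d by noncomm_ring, h2]
  have caad : Commute a (a * a * d) := by
    show a * (a*a*d) = (a*a*d) * a
    rw [show a * (a*a*d) = a*a*(a*d) by noncomm_ring, h1]; noncomm_ring
  have g3 : IsNilpotent ((a * a) - (a * a) * (a * a) * (d * d)) := by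
    have heq : (a * a) - (a * a) * (a * a) * (d * d)
        = (a - a * a * d) * (a + a * a * d) := by
      linear_combination (norm := noncomm_ring)
        (-(a*a)) * h1 - (a*a) * h1 * (a*d) - (a*a*a) * h1 * d
    rw [heq]
    exact Commute.isNilpotent_mul_right
      (((Commute.refl a).add_right caad).sub_left ((caad.symm.add_right (Commute.refl _))))
      h3
  have hpd2 : p * (d * d) = (d * d) * p := drazin_double_comm g1 g2 g3 hpa2
  have hpad : p * (a * d) = (a * d) * p := by
    rw [← hada, show p * (a*a*(d*d)) = (p*(a*a))*(d*d) by noncomm_ring, hpa2,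
        show (a*a)*p*(d*d) = (a*a)*(p*(d*d)) by noncomm_ring, hpd2]
    noncomm_ring
  have hpdp : p * d * p = p * (a * d) := by
    calc p * d * p = p * (d * d * a) * p := by rw [hd2a]
      _ = (p * (d*d)) * (a * p) := by noncomm_ring
      _ = (d*d) * (p * a * p) := by rw [hpd2]; noncomm_ring
      _ = (d*d) * (p * (a*a)) := by rw [hpap]
      _ = (d*d) * ((a*a) * p) := by rw [hpa2]
      _ = (d*d*(a*a)) * p := by noncomm_ring
      _ = (d * a) * p := by rw [hd2a2]
      _ = (a * d) * p := by rw [h1]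
      _ = p * (a * d) := (hpad).symm
  have hd3 : (d:R) ^ 3 = d * (d * d) := by noncomm_ring
  -- condition 1
  have hXB : (p * a) * (p * d ^ 3) = p * a * d * d := by
    calc (p*a) * (p * d^3) = (p*a*p) * (d*(d*d)) := by rw [hd3]; noncomm_ring
      _ = (p*(a*a)) * (d*(d*d)) := by rw [hpap]
      _ = p * ((a*a*(d*d)) * d) := by noncomm_ring
      _ = p * (a * d * d) := by rw [hada]
      _ = p * a * d * d := by noncomm_ring
  have hBX : (p * d ^ 3) * (p * a) = p * a * d * d := by
    calc (p * d^3) * (p*a) = p*d*((d*d)*p)*a := by rw [hd3]; noncomm_ring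
      _ = p*d*(p*(d*d))*a := by rw [hpd2]
      _ = (p*d*p)*((d*d)*a) := by noncomm_ring
      _ = (p*(a*d))*(d*d*a) := by rw [hpdp]
      _ = (p*(a*d))*d := by rw [hd2a]
      _ = p * a * d * d := by noncomm_ring
  refine ⟨hXB.trans hBX.symm, ?_, ?_⟩
  · -- B X B = B
    calc (p * d^3) * (p*a) * (p * d^3) = (p*a*d*d) * (p * d^3) := by rw [hBX]
      _ = (p*a)*((d*d)*p)*(d*(d*d)) := by rw [hd3]; noncomm_ring
      _ = (p*a)*(p*(d*d))*(d*(d*d)) := by rw [hpd2]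
      _ = (p*a*p)*((d*d)*(d*(d*d))) := by noncomm_ring
      _ = (p*(a*a))*((d*d)*(d*(d*d))) := by rw [hpap]
      _ = p*((a*a*(d*d)))*(d*(d*d)) := by noncomm_ring
      _ = p*(a*d)*(d*(d*d)) := by rw [hada]
      _ = p*(a*d*d)*(d*d) := by noncomm_ring
      _ = p*d*(d*d) := by rw [had2]
      _ = p * d^3 := by rw [hd3]; noncomm_ring
  · -- nilpotency
    have hXXB : (p*a) * (p*a) * (p * d^3) = p * (a*a*d) := by
      calc (p*a)*(p*a)*(p*d^3) = (p*a*p)*a*(p*d^3) := by noncomm_ring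
        _ = (p*(a*a))*a*(p*d^3) := by rw [hpap]
        _ = p*a*((a*a)*p)*(d*(d*d)) := by rw [hd3]; noncomm_ring
        _ = p*a*(p*(a*a))*(d*(d*d)) := by rw [← hpa2]
        _ = (p*a*p)*((a*a)*(d*(d*d))) := by noncomm_ring
        _ = (p*(a*a))*((a*a)*(d*(d*d))) := by rw [hpap]
        _ = p*(a*a)*(a*a*(d*d))*d := by noncomm_ring
        _ = p*(a*a)*(a*d)*d := by rw [hada]
        _ = p*(a*(a*a*(d*d))) := by noncomm_ring
        _ = p*(a*(a*d)) := by rw [hada]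
        _ = p*(a*a*d) := by noncomm_ring
    have hdiff : (p*a) - (p*a)*(p*a)*(p*d^3) = p * (a - a*a*d) := by
      rw [hXXB, mul_sub]
    rw [hdiff]
    -- show p * n is nilpotent
    obtain ⟨k, hk⟩ := h3
    have hfacn : a - a*a*d = a * (1 - a*d) := by noncomm_ring
    have hcau : Commute a (1 - a*d) := by
      refine (Commute.one_right a).sub_right ?_
      show a * (a*d) = (a*d)*a
      rw [← mul_assoc, mul_assoc a d a, ← h1, ← mul_assoc]
    have hcpu : Commute p (1 - a*d) := (Commute.one_right p).sub_right hpad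
    have hcpa2 : Commute p (a*a) := hpa2
    have claim : ∀ m : ℕ, (p * (a * (1 - a*d))) ^ (m+1)
        = p * (a*a)^m * a * (1 - a*d)^(m+1) := by
      intro m
      induction m with
      | zero => simp [← mul_assoc]
      | succ m ih =>
        calc (p * (a * (1 - a*d))) ^ (m+2)
            = (p * (a*a)^m * a * (1-a*d)^(m+1)) * (p * (a * (1-a*d))) := by
              rw [pow_succ, ih]
          _ = p * (a*a)^m * a * ((1-a*d)^(m+1) * p) * (a * (1-a*d)) := by noncomm_ring
          _ = p * (a*a)^m * a * (p * (1-a*d)^(m+1)) * (a * (1-a*d)) := by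
              rw [(hcpu.symm.pow_left (m+1)).eq]
          _ = p * (a*a)^m * (a * p) * ((1-a*d)^(m+1) * a) * (1-a*d) := by noncomm_ring
          _ = p * (a*a)^m * (a * p) * (a * (1-a*d)^(m+1)) * (1-a*d) := by
              rw [(hcau.symm.pow_left (m+1)).eq]
          _ = (p * (a*a)^m) * (a*p*a) * (1-a*d)^(m+2) := by
              rw [pow_succ (1-a*d) (m+1)]; noncomm_ring
          _ = ((a*a)^m * p) * (a*p*a) * (1-a*d)^(m+2) := by
              rw [(hcpa2.pow_right m).eq]
          _ = (a*a)^m * (p*a*p) * a * (1-a*d)^(m+2) := by noncomm_ring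
          _ = (a*a)^m * (p*(a*a)) * a * (1-a*d)^(m+2) := by rw [hpap]
          _ = ((a*a)^m * p) * ((a*a) * a) * (1-a*d)^(m+2) := by noncomm_ring
          _ = (p * (a*a)^m) * ((a*a) * a) * (1-a*d)^(m+2) := by
              rw [(hcpa2.pow_right m).eq]
          _ = p * (a*a)^(m+1) * a * (1-a*d)^(m+2) := by
              rw [pow_succ (a*a) m]; noncomm_ring
    refine ⟨k+1, ?_⟩
    rw [hfacn, claim k]
    have e1 : (a*a)^k * a = a^k * a^(k+1) := by
      rw [← sq, ← pow_mul, ← pow_succ, ← pow_add]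
      congr 1
      omega
    have e2 : (a * (1-a*d))^(k+1) = a^(k+1) * (1-a*d)^(k+1) := hcau.mul_pow (k+1)
    have e3 : (a * (1-a*d))^(k+1) = 0 := by
      rw [← hfacn, pow_succ, hk, zero_mul]
    calc p * (a*a)^k * a * (1-a*d)^(k+1)
        = p * (a^k * (a^(k+1) * (1-a*d)^(k+1))) := by rw [show p * (a*a)^k * a = p * ((a*a)^k * a) by noncomm_ring, e1]; noncomm_ring
      _ = p * (a^k * ((a * (1-a*d))^(k+1))) := by rw [e2]
      _ = 0 := by rw [e3, mul_zero, mul_zero]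

end main

theorem stmt8 {R : Type*} [Ring R] (p q d : R) (hp : p * p = p) (hq : q * q = q)
    (hd : IsDrazinInverse (p - q) d) :
    IsDrazinInverse (p - p * q) (p * d ^ 3) := by
  obtain ⟨h1, h2, h3⟩ := hd
  have hpa2 : p * ((p-q)*(p-q)) = ((p-q)*(p-q)) * p := by
    linear_combination (norm := noncomm_ring) q * hp - hp * q + p * hq - hq * p
  have hpap : p * (p-q) * p = p * ((p-q)*(p-q)) := by
    linear_combination (norm := noncomm_ring) hp * q - p * hq
  have hgoal : p - p * q = p * (p - q) := by
    rw [mul_sub, hp]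
  rw [hgoal]
  exact main_aux h1 h2 h3 hp hpa2 hpap
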